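/- Let n ≥ 2, let d_1, …, d_n be unit vectors in ℂ^m, let p = (p_1,…,p_n) be a probability vector, and let u_1, …, u_n be an orthonormal family in ℂ^n. For the pure bipartite input state ψ_AB = Σ_i √p_i · e_i ⊗ u_i with reduced state ρ_A ((ρ_A)_{ik} = √(p_i p_k) ⟨u_k, u_i⟩) and post-interaction bipartite state ρ̃_AB = Σ_{i,j} √(p_i p_j) ⟨d_j, d_i⟩ (e_i e_j^*) ⊗ (u_i u_j^*), one has: V(ρ̃_A) = 0, E(ψ_AB)² = (2(n−1)/n²)(1 − Σ_i p_i²), and (P_s(p) − 1/n)² + E(ψ_AB)² ≤ (n²−1)/n² − (2(n−1)/n²)·Tr(ρ̃_AB²). -/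

import Mathlib

open Matrix ComplexOrder

noncomputable section

/-- Inner product ⟨a, b⟩ = ∑ i, conj (a i) * b i on a finite-dimensional complex space. -/
def ip {k : Type*} [Fintype k] (a b : k → ℂ) : ℂ := ∑ i, star (a i) * b i

/-- The optimal success probability of minimum-error discrimination of the detector
states `d i` with prior probabilities `q i`: the supremum over all POVMs
`Pov` (positive semidefinite matrices summing to the identity) of
`∑ i, q i * ⟨d i, Pov i (d i)⟩`. -/
def Ps {m n : ℕ} (d : Fin n → Fin m → ℂ) (q : Fin n → ℝ) : ℝ :=
  sSup { x : ℝ | ∃ Pov : Fin n → Matrix (Fin m) (Fin m) ℂ,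
    (∀ i, (Pov i).PosSemidef) ∧ (∑ i, Pov i) = 1 ∧
    x = ∑ i, q i * (ip (d i) ((Pov i) *ᵥ (d i))).re }

/-- The visibility `V(ρ̃_A) = √( (2(n−1)/n²) ∑_{i≠k} |⟨d_k, d_i⟩|² |(ρ_A)_{ik}|² )`. -/
def Vis {m n : ℕ} (d : Fin n → Fin m → ℂ) (ρ : Matrix (Fin n) (Fin n) ℂ) : ℝ :=
  Real.sqrt ((2 * ((n : ℝ) - 1) / (n : ℝ) ^ 2) *
    ∑ i, ∑ k, if i = k then 0 else ‖ip (d k) (d i)‖ ^ 2 * ‖ρ i k‖ ^ 2)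

/-- The post-interaction detector state `ρ̃_D = ∑ i, q i • d i (d i)^*`. -/
def detState {m n : ℕ} (d : Fin n → Fin m → ℂ) (q : Fin n → ℝ) :
    Matrix (Fin m) (Fin m) ℂ :=
  ∑ i, (q i : ℂ) • vecMulVec (d i) (star (d i))

/-- The post-interaction particle state `(ρ̃_A)_{ik} = ⟨d_k, d_i⟩ (ρ_A)_{ik}`. -/
def post {m n : ℕ} (d : Fin n → Fin m → ℂ) (ρ : Matrix (Fin n) (Fin n) ℂ) :
    Matrix (Fin n) (Fin n) ℂ :=
  Matrix.of fun i k => ip (d k) (d i) * ρ i k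

/-- The purity `Tr(ρ²)` (as a real number). -/
def purity {k : Type*} [Fintype k] (ρ : Matrix k k ℂ) : ℝ := ((ρ * ρ).trace).re

/-- Partial trace over the second tensor factor: `(Tr_B ρ)_{ik} = ∑ j, ρ_{(i,j),(k,j)}`. -/
def ptraceB {n : ℕ} (ρ : Matrix (Fin n × Fin n) (Fin n × Fin n) ℂ) :
    Matrix (Fin n) (Fin n) ℂ :=
  Matrix.of fun i k => ∑ j, ρ (i, j) (k, j)


lemma ip_eq_dot {k : Type*} [Fintype k] (a b : k → ℂ) : ip a b = star a ⬝ᵥ b := rfl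

lemma ip_eq_inner {k : Type*} [Fintype k] (a b : k → ℂ) :
    ip a b = (inner (𝕜 := ℂ) ((WithLp.equiv 2 _).symm a : EuclideanSpace ℂ k) ((WithLp.equiv 2 _).symm b)) := by
  rw [PiLp.inner_apply]; simp [ip, mul_comm]

lemma ip_norm_le {k : Type*} [Fintype k] (a b : k → ℂ) :
    ‖ip a b‖ ≤ Real.sqrt (ip a a).re * Real.sqrt (ip b b).re := by
  rw [ip_eq_inner, ip_eq_inner a a, ip_eq_inner b b]
  set A := ((WithLp.equiv 2 _).symm a : EuclideanSpace ℂ k)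
  set B := ((WithLp.equiv 2 _).symm b : EuclideanSpace ℂ k)
  have h1 : (inner (𝕜 := ℂ) A A).re = ‖A‖^2 := by simpa using inner_self_eq_norm_sq (𝕜 := ℂ) A
  have h2 : (inner (𝕜 := ℂ) B B).re = ‖B‖^2 := by simpa using inner_self_eq_norm_sq (𝕜 := ℂ) B
  rw [h1, h2, Real.sqrt_sq (norm_nonneg _), Real.sqrt_sq (norm_nonneg _)]
  exact norm_inner_le_norm A B

lemma ip_psd_eq {m : ℕ} (B : Matrix (Fin m) (Fin m) ℂ) (a b : Fin m → ℂ) :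
    ip a ((Bᴴ * B) *ᵥ b) = ip (B *ᵥ a) (B *ᵥ b) := by
  rw [ip_eq_dot, ip_eq_dot, ← mulVec_mulVec, dotProduct_mulVec, ← star_mulVec]

lemma psd_cs {m : ℕ} {A : Matrix (Fin m) (Fin m) ℂ} (hA : A.PosSemidef) (a b : Fin m → ℂ) :
    ‖ip a (A *ᵥ b)‖ ≤ Real.sqrt (ip a (A *ᵥ a)).re * Real.sqrt (ip b (A *ᵥ b)).re := by
  obtain ⟨B, rfl⟩ : ∃ B : Matrix (Fin m) (Fin m) ℂ, A = Bᴴ * B := by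
    open scoped MatrixOrder Matrix.Norms.L2Operator in
    exact CStarAlgebra.nonneg_iff_eq_star_mul_self.mp hA.nonneg
  rw [ip_psd_eq, ip_psd_eq, ip_psd_eq]
  exact ip_norm_le _ _

lemma psd_re_nonneg {m : ℕ} {A : Matrix (Fin m) (Fin m) ℂ} (hA : A.PosSemidef) (a : Fin m → ℂ) :
    0 ≤ (ip a (A *ᵥ a)).re := by
  have := hA.dotProduct_mulVec_nonneg a
  rw [Complex.le_def] at this
  simpa [ip_eq_dot] using this.1

lemma psd_sum {m n : ℕ} (M : Fin n → Matrix (Fin m) (Fin m) ℂ) (s : Finset (Fin n))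
    (h : ∀ j, (M j).PosSemidef) : (∑ j ∈ s, M j).PosSemidef := by
  induction s using Finset.induction with
  | empty => simpa using Matrix.PosSemidef.zero
  | insert _ _ hx ih => rw [Finset.sum_insert hx]; exact (h _).add ih

lemma ip_mulVec_sum {m n : ℕ} (a b : Fin m → ℂ) (M : Fin n → Matrix (Fin m) (Fin m) ℂ)
    (s : Finset (Fin n)) : ip a ((∑ j ∈ s, M j) *ᵥ b) = ∑ j ∈ s, ip a (M j *ᵥ b) := by
  induction s using Finset.induction with
  | empty => simp [ip, dotProduct]
  | insert _ _ hx ih => rw [Finset.sum_insert hx, add_mulVec, Finset.sum_insert hx, ← ih,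
      ip_eq_dot, ip_eq_dot, ip_eq_dot, dotProduct_add]
noncomputable section

/-- certificate positivity -/
lemma keyA {N : ℝ} (hN : 3 ≤ N) : 0 ≤ N^3 - 6*(N-1)^2 := by nlinarith [sq_nonneg (N-3), sq_nonneg N]

lemma keyAXE {N X : ℝ} (hN : 3 ≤ N) (hXlo : 2 - N ≤ N*X) :
    0 ≤ (N^3 - 6*(N-1)^2)*X + (3*N^3 - 14*N^2 + 20*N - 10) := by
  have hA := keyA hN
  have h1 : (N^3 - 6*(N-1)^2)*(2-N) ≤ (N^3 - 6*(N-1)^2)*(N*X) :=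
    mul_le_mul_of_nonneg_left hXlo hA
  have hN0 : (0:ℝ) < N := by linarith
  have h2 : 0 ≤ (N^3 - 6*(N-1)^2)*(2-N) + N*(3*N^3 - 14*N^2 + 20*N - 10) := by
    nlinarith [sq_nonneg (N-3), sq_nonneg N, mul_nonneg (mul_nonneg hN0.le hN0.le) (by linarith : (0:ℝ) ≤ N - 3)]
  nlinarith [h1, h2, hN0]

/-- Final scalar inequality for the case n ≥ 3. -/
lemma key3 {N X Y Qy QD : ℝ} (hN : 3 ≤ N) (hXY : X^2 + Y^2 ≤ 1)
    (hQy : Y^2 ≤ N*Qy) (hQD : (1-X)^2 ≤ N*QD) (hXlo : 2 - N ≤ N*X) :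
    (N-2+N*X)^2/4 ≤ (N-1)^2 - 2*(N-1)*((1 - X^2 + Y^2 - 2*Qy)/2 + ((1-X)^2 - QD)/4) := by
  have hN0 : (0:ℝ) < N := by linarith
  have hX1 : X ≤ 1 := by nlinarith [sq_nonneg Y, sq_nonneg (X-1), sq_nonneg (X+1)]
  have hcert : 0 ≤ (1-X)*((N^3 - 6*(N-1)^2)*X + (3*N^3 - 14*N^2 + 20*N - 10)) :=
    mul_nonneg (by linarith) (keyAXE hN hXlo)
  have h1 : 0 ≤ 8*(N-1)*(N*Qy - Y^2) :=
    mul_nonneg (by linarith) (by linarith)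
  have h2 : 0 ≤ 2*(N-1)*(N*QD - (1-X)^2) :=
    mul_nonneg (by linarith) (by linarith)
  have h3 : 0 ≤ (4*N-8)*(N-1)*((1-X^2) - Y^2) :=
    mul_nonneg (mul_nonneg (by linarith) (by linarith)) (by linarith)
  nlinarith [hcert, h1, h2, h3, hN0, mul_pos hN0 hN0]
noncomputable section

lemma sq_le_imp_le {a b : ℝ} (h : a^2 ≤ b^2) (ha : 0 ≤ a) (hb : 0 ≤ b) : a ≤ b := by
  nlinarith [h, ha, hb]

lemma pair_cap_core {A B C E F G γ : ℝ}
    (hA0 : 0 ≤ A) (hB0 : 0 ≤ B) (hC0 : 0 ≤ C) (hE0 : 0 ≤ E) (hF0 : 0 ≤ F) (hG0 : 0 ≤ G)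
    (hAB : A^2 + B^2 = 1) (hCE : C^2 + E^2 = 1) (hFG : F^2 + G^2 = 1)
    (hAE : A ≤ E) (hCB : C ≤ B) (hγ0 : 0 ≤ γ) (hγ : γ ≤ A*F + B*G) :
    γ^2 ≤ (E*F + C*G)^2 + E^2*G^2 := by
  rcases le_total F E with hEF | hFE
  · -- F ≤ E: γ ≤ 1 ≤ RHS
    have hCG : C ≤ G := by
      apply sq_le_imp_le _ hC0 hG0; nlinarith [pow_le_pow_left₀ hF0 hEF 2]
    have hCF : C*F ≤ G*E := mul_le_mul hCG hEF hF0 hG0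
    have hRHS : 1 ≤ (E*F + C*G)^2 + E^2*G^2 := by
      nlinarith [mul_nonneg (mul_nonneg hC0 hF0) (by nlinarith [hCF, mul_nonneg hE0 hG0] : 0 ≤ 2*(E*G) - C*F)]
    have h2 : (A*F + B*G)^2 ≤ 1 := by nlinarith [sq_nonneg (A*G - B*F)]
    have hγ1 : γ ≤ 1 := by nlinarith [sq_nonneg (A*F + B*G - 1)]
    nlinarith [hγ1, hγ0]
  · -- E ≤ F : monotonicity
    have hGC : G ≤ C := by
      apply sq_le_imp_le _ hG0 hC0; nlinarith [pow_le_pow_left₀ hE0 hFE 2]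
    have key1 : G*E ≤ B*F := mul_le_mul (hGC.trans hCB) hFE hE0 hB0
    have key2 : G*A ≤ C*F := mul_le_mul hGC (hAE.trans hFE) hA0 hC0
    have hBC : (B-C)*(B+C) = (E-A)*(E+A) := by linear_combination hAB - hCE
    have goal_mono : A*F + B*G ≤ E*F + C*G := by
      rcases (eq_or_lt_of_le (show (0:ℝ) ≤ B + C by linarith)) with h0 | hpos
      · have hBz : B = 0 := by linarith
        have hCz : C = 0 := by linarith
        have h9 := mul_le_mul_of_nonneg_right hAE hF0
        rw [hBz, hCz]; linarith
      · have hmul : (G*(B-C))*(B+C) ≤ (F*(E-A))*(B+C) := by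
          calc (G*(B-C))*(B+C) = G*((E-A)*(E+A)) := by rw [← hBC]; ring
          _ = (E-A)*(G*(E+A)) := by ring
          _ ≤ (E-A)*(F*(B+C)) := by
              apply mul_le_mul_of_nonneg_left _ (by linarith)
              nlinarith [key1, key2]
          _ = (F*(E-A))*(B+C) := by ring
        have h3 := le_of_mul_le_mul_right hmul hpos
        nlinarith [h3]
    have h4 : γ^2 ≤ (E*F + C*G)^2 := pow_le_pow_left₀ hγ0 (hγ.trans goal_mono) 2
    have h5 : 0 ≤ E^2*G^2 := by positivity
    linarith [h4, h5]

lemma pair_cap {ti tk s γ : ℝ} (hti0 : 0 ≤ ti) (hti1 : ti ≤ 1) (htk0 : 0 ≤ tk) (htk1 : tk ≤ 1)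
    (hs0 : 0 ≤ s) (hs1 : s ≤ 1 - ti) (hγ0 : 0 ≤ γ)
    (hγ : γ ≤ Real.sqrt s * Real.sqrt tk + Real.sqrt (1-s) * Real.sqrt (1-tk)) :
    γ^2 ≤ (Real.sqrt (1-ti) * Real.sqrt tk + Real.sqrt ti * Real.sqrt (1-tk))^2
      + (1-ti)*(1-tk) := by
  have h := pair_cap_core (A := Real.sqrt s) (B := Real.sqrt (1-s)) (C := Real.sqrt ti)
    (E := Real.sqrt (1-ti)) (F := Real.sqrt tk) (G := Real.sqrt (1-tk)) (γ := γ)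
    (Real.sqrt_nonneg _) (Real.sqrt_nonneg _) (Real.sqrt_nonneg _) (Real.sqrt_nonneg _)
    (Real.sqrt_nonneg _) (Real.sqrt_nonneg _)
    (by rw [Real.sq_sqrt hs0, Real.sq_sqrt (by linarith : (0:ℝ) ≤ 1-s)]; ring)
    (by rw [Real.sq_sqrt hti0, Real.sq_sqrt (by linarith : (0:ℝ) ≤ 1-ti)]; ring)
    (by rw [Real.sq_sqrt htk0, Real.sq_sqrt (by linarith : (0:ℝ) ≤ 1-tk)]; ring)
    (Real.sqrt_le_sqrt hs1) (Real.sqrt_le_sqrt (by linarith)) hγ0 hγ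
  have e1 : (Real.sqrt (1-ti))^2 = 1-ti := Real.sq_sqrt (by linarith)
  have e2 : (Real.sqrt (1-tk))^2 = 1-tk := Real.sq_sqrt (by linarith)
  calc γ^2 ≤ (Real.sqrt (1-ti) * Real.sqrt tk + Real.sqrt ti * Real.sqrt (1-tk))^2
      + (Real.sqrt (1-ti))^2*(Real.sqrt (1-tk))^2 := h
  _ = _ := by rw [e1, e2]

open Matrix ComplexOrder in
lemma ip_add {k : Type*} [Fintype k] (a u v : k → ℂ) : ip a (u + v) = ip a u + ip a v := by
  simp [ip, mul_add, Finset.sum_add_distrib]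

open Matrix ComplexOrder in
lemma ip_smul {k : Type*} [Fintype k] (a v : k → ℂ) (c : ℂ) : ip a (c • v) = c * ip a v := by
  simp [ip, Finset.mul_sum]; exact Finset.sum_congr rfl fun i _ => by ring

open Matrix ComplexOrder in
lemma ip_norm_swap {k : Type*} [Fintype k] (a b : k → ℂ) : ‖ip a b‖ = ‖ip b a‖ := by
  have h : ip b a = star (ip a b) := by
    simp only [ip, star_sum, star_mul', star_star]
    exact Finset.sum_congr rfl fun i _ => mul_comm _ _
  rw [h, norm_star]

lemma offdiag_sum {n : ℕ} (f : Fin n → ℝ) :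
    ∑ i, ∑ k, (if i = k then (0:ℝ) else f i * f k) = (∑ i, f i)^2 - ∑ i, (f i)^2 := by
  have h1 : ∀ i k : Fin n, (if i = k then (0:ℝ) else f i * f k)
      = f i * f k - (if i = k then f i * f k else 0) := by
    intro i k; by_cases h : i = k <;> simp [h]
  simp_rw [h1, Finset.sum_sub_distrib, Finset.sum_ite_eq, Finset.mem_univ, if_true]
  rw [← Finset.sum_mul_sum]
  congr 1
  · rw [sq]
  · exact Finset.sum_congr rfl fun i _ => (sq (f i)).symm

lemma cap_id {ti tk a b c e : ℝ} (ha : a^2 = ti) (hb : b^2 = 1-ti) (hc : c^2 = tk)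
    (he : e^2 = 1-tk) :
    (b*c + a*e)^2 + b^2*e^2
      = (1 - (2*ti-1)*(2*tk-1) + (2*(a*b))*(2*(c*e)))/2 + (1-(2*ti-1))*(1-(2*tk-1))/4 := by
  linear_combination (b^2)*hc + (a^2 + b^2)*he + hb + (1-tk)*ha

lemma n2core {p0 p1 t0 t1 γ : ℝ} (hp0 : 0 ≤ p0) (hp1 : 0 ≤ p1) (hps : p0 + p1 = 1)
    (ht00 : 0 ≤ t0) (ht01 : t0 ≤ 1) (ht10 : 0 ≤ t1) (ht11 : t1 ≤ 1) (hγ0 : 0 ≤ γ)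
    (hγ : γ ≤ Real.sqrt (1-t0) * Real.sqrt t1 + Real.sqrt t0 * Real.sqrt (1-t1)) :
    p0*t0 + p1*t1 ≤ 1/2 + Real.sqrt (1/4 - p0*p1*γ^2) := by
  have hb0 : (0:ℝ) ≤ Real.sqrt (1-t0) * Real.sqrt t1 + Real.sqrt t0 * Real.sqrt (1-t1) := by
    positivity
  have hγ2 : γ^2 ≤ (Real.sqrt (1-t0) * Real.sqrt t1 + Real.sqrt t0 * Real.sqrt (1-t1))^2 :=
    pow_le_pow_left₀ hγ0 hγ 2
  set a := Real.sqrt t0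
  set b := Real.sqrt (1-t0)
  set c := Real.sqrt t1
  set e := Real.sqrt (1-t1)
  have ha2 : a^2 = t0 := Real.sq_sqrt ht00
  have hb2 : b^2 = 1-t0 := Real.sq_sqrt (by linarith)
  have hc2 : c^2 = t1 := Real.sq_sqrt ht10
  have he2 : e^2 = 1-t1 := Real.sq_sqrt (by linarith)
  have hw : p0*p1*γ^2 ≤ (p0*t0+p1*t1)*(1-(p0*t0+p1*t1)) := by
    have hkey : p0*p1*(b*c + a*e)^2 ≤ (p0*(a^2)+p1*(c^2))*(p0*(b^2)+p1*(e^2)) := by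
      nlinarith [sq_nonneg (p0*(a*b) - p1*(c*e)), mul_nonneg hp0 hp1]
    have he : (p0*(a^2)+p1*(c^2))*(p0*(b^2)+p1*(e^2))
        = (p0*t0+p1*t1)*(1-(p0*t0+p1*t1)) := by
      rw [ha2, hb2, hc2, he2]; linear_combination (p0*t0+p1*t1)*hps
    rw [he] at hkey
    nlinarith [mul_nonneg hp0 hp1, hγ2]
  have hsq : ((p0*t0+p1*t1) - 1/2)^2 ≤ 1/4 - p0*p1*γ^2 := by nlinarith [hw]
  have h1 : (p0*t0+p1*t1) - 1/2 ≤ Real.sqrt (1/4 - p0*p1*γ^2) := by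
    calc (p0*t0+p1*t1) - 1/2 ≤ |(p0*t0+p1*t1) - 1/2| := le_abs_self _
    _ = Real.sqrt (((p0*t0+p1*t1) - 1/2)^2) := (Real.sqrt_sq_eq_abs _).symm
    _ ≤ _ := Real.sqrt_le_sqrt hsq
  linarith
set_option maxHeartbeats 1600000 in
lemma agg3 {n : ℕ} (hn3 : 3 ≤ (n:ℝ)) (p t : Fin n → ℝ) (g : Fin n → Fin n → ℝ)
    (hp : ∀ i, 0 ≤ p i) (hp1 : ∑ i, p i = 1)
    (ht0 : ∀ i, 0 ≤ t i) (ht1 : ∀ i, t i ≤ 1)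
    (hg : ∀ i k, i ≠ k → (g i k)^2 ≤
      (1 - (2*t i-1)*(2*t k-1)
        + (2*(Real.sqrt (t i)*Real.sqrt (1-t i)))*(2*(Real.sqrt (t k)*Real.sqrt (1-t k))))/2
      + (1-(2*t i-1))*(1-(2*t k-1))/4)
    (hVlo : 1/(n:ℝ) < ∑ i, p i * t i) :
    ∑ i, p i * t i ≤ 1/(n:ℝ) + Real.sqrt (((n:ℝ)-1)^2/(n:ℝ)^2 - (2*((n:ℝ)-1)/(n:ℝ)^2) *
      ∑ i, ∑ k, if i = k then 0 else p i * p k * (g i k)^2) := by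
  have hN0 : (0:ℝ) < (n:ℝ) := by linarith
  have hsq1 : ∀ i, (Real.sqrt (t i))^2 = t i := fun i => Real.sq_sqrt (ht0 i)
  have hsq2 : ∀ i, (Real.sqrt (1-t i))^2 = 1-t i :=
    fun i => Real.sq_sqrt (by linarith [ht1 i])
  have hxy1 : ∀ i, (2*t i-1)^2 + (2*(Real.sqrt (t i)*Real.sqrt (1-t i)))^2 = 1 := by
    intro i
    linear_combination (4*(Real.sqrt (t i))^2)*hsq2 i + (4*(1-t i))*hsq1 i
  -- auxiliary functions
  set f2 : Fin n → ℝ := fun i => p i * (2*t i-1) with hf2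
  set f3 : Fin n → ℝ := fun i => p i * (2*(Real.sqrt (t i)*Real.sqrt (1-t i))) with hf3
  set f4 : Fin n → ℝ := fun i => p i * (2-2*t i) with hf4
  set V := ∑ i, p i * t i with hV
  set X := ∑ i, f2 i with hX
  set Y := ∑ i, f3 i with hY
  set Qy := ∑ i, (f3 i)^2 with hQy
  set QD := ∑ i, (f4 i)^2 with hQD
  have hXV : X = 2*V - 1 := by
    rw [hX, hV]
    calc ∑ i, f2 i = ∑ i, (2*(p i * t i) - p i) :=
          Finset.sum_congr rfl fun i _ => by simp only [hf2]; ring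
    _ = 2*(∑ i, p i * t i) - ∑ i, p i := by
          rw [Finset.sum_sub_distrib, Finset.mul_sum]
    _ = 2*(∑ i, p i * t i) - 1 := by rw [hp1]
  have hf4X : ∑ i, f4 i = 1 - X := by
    have h1 : ∑ i, f4 i = 2*(∑ i, p i) - 2*(∑ i, p i * t i) := by
      rw [Finset.mul_sum, Finset.mul_sum, ← Finset.sum_sub_distrib]
      exact Finset.sum_congr rfl fun i _ => by simp only [hf4]; ring
    rw [h1, hp1, hXV, hV]; ring
  -- step 1: bound the off-diagonal sum by the caps
  have hstep1 : (∑ i, ∑ k, if i = k then (0:ℝ) else p i * p k * (g i k)^2) ≤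
      ∑ i, ∑ k, if i = k then (0:ℝ) else
        ((1/2)*(p i * p k) - (1/2)*(f2 i * f2 k) + (1/2)*(f3 i * f3 k)
          + (1/4)*(f4 i * f4 k)) := by
    apply Finset.sum_le_sum; intro i _
    apply Finset.sum_le_sum; intro k _
    by_cases h : i = k
    · simp [h]
    · simp only [if_neg h]
      have h1 := mul_le_mul_of_nonneg_left (hg i k h) (mul_nonneg (hp i) (hp k))
      calc p i * p k * (g i k)^2 ≤ p i * p k *
          ((1 - (2*t i-1)*(2*t k-1)
            + (2*(Real.sqrt (t i)*Real.sqrt (1-t i)))*(2*(Real.sqrt (t k)*Real.sqrt (1-t k))))/2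
          + (1-(2*t i-1))*(1-(2*t k-1))/4) := h1
      _ = (1/2)*(p i * p k) - (1/2)*(f2 i * f2 k) + (1/2)*(f3 i * f3 k)
          + (1/4)*(f4 i * f4 k) := by rw [hf2, hf3, hf4]; ring
  -- step 2: compute the cap sum
  have hstep2 : (∑ i, ∑ k, if i = k then (0:ℝ) else
        ((1/2)*(p i * p k) - (1/2)*(f2 i * f2 k) + (1/2)*(f3 i * f3 k)
          + (1/4)*(f4 i * f4 k)))
      = (1/2)*(1 - ∑ i, (p i)^2) - (1/2)*(X^2 - ∑ i, (f2 i)^2)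
        + (1/2)*(Y^2 - Qy) + (1/4)*((1-X)^2 - QD) := by
    have hpt : ∀ i k : Fin n, (if i = k then (0:ℝ) else
        ((1/2)*(p i * p k) - (1/2)*(f2 i * f2 k) + (1/2)*(f3 i * f3 k)
          + (1/4)*(f4 i * f4 k)))
        = (1/2)*(if i = k then 0 else p i * p k)
          - (1/2)*(if i = k then 0 else f2 i * f2 k)
          + (1/2)*(if i = k then 0 else f3 i * f3 k)
          + (1/4)*(if i = k then 0 else f4 i * f4 k) := by
      intro i k; by_cases h : i = k <;> simp [h]
    calc (∑ i, ∑ k, if i = k then (0:ℝ) else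
        ((1/2)*(p i * p k) - (1/2)*(f2 i * f2 k) + (1/2)*(f3 i * f3 k)
          + (1/4)*(f4 i * f4 k)))
        = ∑ i, ∑ k, ((1/2)*(if i = k then 0 else p i * p k)
          - (1/2)*(if i = k then 0 else f2 i * f2 k)
          + (1/2)*(if i = k then 0 else f3 i * f3 k)
          + (1/4)*(if i = k then 0 else f4 i * f4 k)) :=
          Finset.sum_congr rfl fun i _ => Finset.sum_congr rfl fun k _ => hpt i k
    _ = (1/2)*(∑ i, ∑ k, if i = k then 0 else p i * p k)
          - (1/2)*(∑ i, ∑ k, if i = k then 0 else f2 i * f2 k)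
          + (1/2)*(∑ i, ∑ k, if i = k then 0 else f3 i * f3 k)
          + (1/4)*(∑ i, ∑ k, if i = k then 0 else f4 i * f4 k) := by
        simp only [Finset.sum_add_distrib, Finset.sum_sub_distrib, ← Finset.mul_sum]
    _ = _ := by rw [offdiag_sum p, offdiag_sum f2, offdiag_sum f3, offdiag_sum f4,
          hp1, hf4X, ← hX, ← hY, ← hQy, ← hQD]; norm_num
  -- scalar facts
  have hQsplit : (∑ i, (f2 i)^2) + Qy = ∑ i, (p i)^2 := by
    rw [hQy, ← Finset.sum_add_distrib]
    apply Finset.sum_congr rfl; intro i _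
    simp only [hf2, hf3]
    linear_combination (p i^2) * hxy1 i
  have hCS1 : X^2 ≤ (∑ i, p i) * (∑ i, p i * (2*t i-1)^2) := by
    have h := Finset.sum_mul_sq_le_sq_mul_sq Finset.univ (fun i => Real.sqrt (p i))
      (fun i => Real.sqrt (p i) * (2*t i-1))
    have he : ∀ i, Real.sqrt (p i) * (Real.sqrt (p i) * (2*t i-1)) = f2 i := by
      intro i; simp only [hf2]; rw [← mul_assoc, Real.mul_self_sqrt (hp i)]
    have he2 : ∀ i, (Real.sqrt (p i))^2 = p i := fun i => Real.sq_sqrt (hp i)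
    have he3 : ∀ i, (Real.sqrt (p i) * (2*t i-1))^2 = p i * (2*t i-1)^2 := by
      intro i; rw [mul_pow, he2 i]
    rw [Finset.sum_congr rfl fun i _ => he i, Finset.sum_congr rfl fun i _ => he2 i,
      Finset.sum_congr rfl fun i _ => he3 i] at h
    rw [hX]; exact h
  have hCS2 : Y^2 ≤ (∑ i, p i) * (∑ i, p i * (2*(Real.sqrt (t i)*Real.sqrt (1-t i)))^2) := by
    have h := Finset.sum_mul_sq_le_sq_mul_sq Finset.univ (fun i => Real.sqrt (p i))
      (fun i => Real.sqrt (p i) * (2*(Real.sqrt (t i)*Real.sqrt (1-t i))))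
    have he : ∀ i, Real.sqrt (p i) * (Real.sqrt (p i) * (2*(Real.sqrt (t i)*Real.sqrt (1-t i)))) = f3 i := by
      intro i; simp only [hf3]; rw [← mul_assoc, Real.mul_self_sqrt (hp i)]
    have he2 : ∀ i, (Real.sqrt (p i))^2 = p i := fun i => Real.sq_sqrt (hp i)
    have he3 : ∀ i, (Real.sqrt (p i) * (2*(Real.sqrt (t i)*Real.sqrt (1-t i))))^2
        = p i * (2*(Real.sqrt (t i)*Real.sqrt (1-t i)))^2 := by
      intro i; rw [mul_pow, he2 i]
    rw [Finset.sum_congr rfl fun i _ => he i, Finset.sum_congr rfl fun i _ => he2 i,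
      Finset.sum_congr rfl fun i _ => he3 i] at h
    rw [hY]; exact h
  have hXY : X^2 + Y^2 ≤ 1 := by
    have hsum : (∑ i, p i * (2*t i-1)^2) + (∑ i, p i * (2*(Real.sqrt (t i)*Real.sqrt (1-t i)))^2)
        = 1 := by
      rw [← Finset.sum_add_distrib]
      calc ∑ i, (p i * (2*t i-1)^2 + p i * (2*(Real.sqrt (t i)*Real.sqrt (1-t i)))^2)
          = ∑ i, p i := Finset.sum_congr rfl fun i _ => by
            linear_combination (p i) * hxy1 i
      _ = 1 := hp1
    nlinarith [hCS1, hCS2, hp1, hsum]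
  have hone : ∑ i : Fin n, (1:ℝ)^2 = (n:ℝ) := by simp
  have hQyb : Y^2 ≤ (n:ℝ)*Qy := by
    have h := Finset.sum_mul_sq_le_sq_mul_sq Finset.univ (fun _ : Fin n => (1:ℝ)) f3
    simp only [one_pow, one_mul] at h
    have hcard : ∑ _i : Fin n, (1:ℝ) = (n:ℝ) := by simp
    rw [hcard] at h
    rw [hY, hQy]; exact h
  have hQDb : (1-X)^2 ≤ (n:ℝ)*QD := by
    have h := Finset.sum_mul_sq_le_sq_mul_sq Finset.univ (fun _ : Fin n => (1:ℝ)) f4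
    simp only [one_pow, one_mul] at h
    have hcard : ∑ _i : Fin n, (1:ℝ) = (n:ℝ) := by simp
    rw [hcard, hf4X] at h
    rw [hQD]; exact h
  have hXlo : 2 - (n:ℝ) ≤ (n:ℝ)*X := by
    rw [hXV]
    have h1 : 1 < (n:ℝ)*V := by
      rw [show (1:ℝ) = (n:ℝ)*(1/(n:ℝ)) by field_simp]
      exact mul_lt_mul_of_pos_left hVlo hN0
    nlinarith [h1]
  have hk3 := key3 hn3 hXY hQyb hQDb hXlo
  -- combine
  set SS := ∑ i, ∑ k, if i = k then (0:ℝ) else p i * p k * (g i k)^2 with hSSd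
  have hSScap : SS ≤ (1 - X^2 + Y^2 - 2*Qy)/2 + ((1-X)^2 - QD)/4 := by
    have := hstep1.trans_eq hstep2
    linarith [hQsplit, this]
  have hk3' : ((n:ℝ)-2+(n:ℝ)*X)^2/4 ≤ ((n:ℝ)-1)^2 - 2*((n:ℝ)-1)*SS := by
    nlinarith [hk3, hSScap, hn3]
  -- conclude
  have hveq : V - 1/(n:ℝ) = ((n:ℝ)-2+(n:ℝ)*X)/(2*(n:ℝ)) := by
    rw [hXV]; field_simp; ring
  have hfinal : (V - 1/(n:ℝ))^2 ≤ ((n:ℝ)-1)^2/(n:ℝ)^2 - (2*((n:ℝ)-1)/(n:ℝ)^2)*SS := by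
    rw [hveq, div_pow]
    have harg : ((n:ℝ)-1)^2/(n:ℝ)^2 - (2*((n:ℝ)-1)/(n:ℝ)^2)*SS
        = (((n:ℝ)-1)^2 - 2*((n:ℝ)-1)*SS)/(n:ℝ)^2 := by ring
    rw [harg]
    rw [div_le_div_iff₀ (by positivity) (by positivity)]
    nlinarith [hk3', sq_nonneg (n:ℝ), mul_pos hN0 hN0]
  have h1 : V - 1/(n:ℝ) ≤ Real.sqrt (((n:ℝ)-1)^2/(n:ℝ)^2 - (2*((n:ℝ)-1)/(n:ℝ)^2)*SS) := by
    calc V - 1/(n:ℝ) ≤ |V - 1/(n:ℝ)| := le_abs_self _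
    _ = Real.sqrt ((V - 1/(n:ℝ))^2) := (Real.sqrt_sq_eq_abs _).symm
    _ ≤ _ := Real.sqrt_le_sqrt hfinal
  linarith
open Matrix ComplexOrder in
set_option maxHeartbeats 1600000 in
lemma povm_bound {n m : ℕ} (hn : 2 ≤ n) (d : Fin n → Fin m → ℂ)
    (hd : ∀ i, ip (d i) (d i) = 1)
    (p : Fin n → ℝ) (hp : ∀ i, 0 ≤ p i) (hp1 : ∑ i, p i = 1)
    (Pov : Fin n → Matrix (Fin m) (Fin m) ℂ) (hpos : ∀ i, (Pov i).PosSemidef)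
    (hsum : ∑ i, Pov i = 1) :
    ∑ i, p i * (ip (d i) ((Pov i) *ᵥ (d i))).re ≤ 1/(n:ℝ) +
      Real.sqrt (((n:ℝ)-1)^2/(n:ℝ)^2 - (2*((n:ℝ)-1)/(n:ℝ)^2) *
        ∑ i, ∑ k, if i = k then 0 else p i * p k * ‖ip (d k) (d i)‖^2) := by
  have hN0 : (0:ℝ) < n := by positivity
  -- the matrix of transition probabilities
  set s : Fin n → Fin n → ℝ := fun i j => (ip (d i) (Pov j *ᵥ d i)).re with hs
  have hs0 : ∀ i j, 0 ≤ s i j := fun i j => psd_re_nonneg (hpos j) (d i)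
  have hrow : ∀ i, ∑ j, s i j = 1 := by
    intro i
    have h := ip_mulVec_sum (d i) (d i) Pov Finset.univ
    rw [hsum, one_mulVec, hd i] at h
    calc ∑ j, s i j = (∑ j, ip (d i) (Pov j *ᵥ d i)).re := by rw [Complex.re_sum]
    _ = 1 := by rw [← h]; simp
  have hs1 : ∀ i j, s i j ≤ 1 := by
    intro i j
    rw [← hrow i]
    exact Finset.single_le_sum (fun j _ => hs0 i j) (Finset.mem_univ j)
  have hpairsum : ∀ i k, i ≠ k → s i i + s i k ≤ 1 := by
    intro i k hik
    rw [← hrow i, ← Finset.sum_pair hik]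
    exact Finset.sum_le_sum_of_subset_of_nonneg (Finset.subset_univ _)
      (fun j _ _ => hs0 i j)
  -- complement POVM element and Cauchy-Schwarz bound for overlaps
  have hgam : ∀ i k : Fin n, ‖ip (d i) (d k)‖ ≤
      Real.sqrt (s i k) * Real.sqrt (s k k)
        + Real.sqrt (1 - s i k) * Real.sqrt (1 - s k k) := by
    intro i k
    set Nm : Matrix (Fin m) (Fin m) ℂ := ∑ j ∈ Finset.univ.erase k, Pov j with hNm
    have hNpsd : Nm.PosSemidef := psd_sum Pov _ hpos
    have hNsum : Pov k + Nm = 1 := by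
      rw [hNm, Finset.add_sum_erase _ _ (Finset.mem_univ k)]; exact hsum
    have hNval : ∀ l : Fin n, (ip (d l) (Nm *ᵥ d l)).re = 1 - s l k := by
      intro l
      rw [hNm, ip_mulVec_sum, Complex.re_sum]
      have : ∑ j ∈ Finset.univ.erase k, (ip (d l) (Pov j *ᵥ d l)).re
          = (∑ j, s l j) - s l k := Finset.sum_erase_eq_sub (Finset.mem_univ k)
      rw [this, hrow l]
    have hsplit : ip (d i) (d k) = ip (d i) (Pov k *ᵥ d k) + ip (d i) (Nm *ᵥ d k) := by
      rw [← ip_add, ← add_mulVec, hNsum, one_mulVec]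
    calc ‖ip (d i) (d k)‖ ≤ ‖ip (d i) (Pov k *ᵥ d k)‖ + ‖ip (d i) (Nm *ᵥ d k)‖ := by
          rw [hsplit]; exact norm_add_le _ _
    _ ≤ Real.sqrt (ip (d i) (Pov k *ᵥ d i)).re * Real.sqrt (ip (d k) (Pov k *ᵥ d k)).re
        + Real.sqrt (ip (d i) (Nm *ᵥ d i)).re * Real.sqrt (ip (d k) (Nm *ᵥ d k)).re :=
          add_le_add (psd_cs (hpos k) _ _) (psd_cs hNpsd _ _)
    _ = _ := by rw [hNval i, hNval k]
  -- abbreviations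
  set t : Fin n → ℝ := fun i => s i i with ht
  have ht0 : ∀ i, 0 ≤ t i := fun i => hs0 i i
  have ht1 : ∀ i, t i ≤ 1 := fun i => hs1 i i
  set SS : ℝ := ∑ i, ∑ k, if i = k then 0 else p i * p k * ‖ip (d k) (d i)‖^2 with hSS
  set V : ℝ := ∑ i, p i * t i with hV
  show V ≤ 1/(n:ℝ) + Real.sqrt (((n:ℝ)-1)^2/(n:ℝ)^2 - (2*((n:ℝ)-1)/(n:ℝ)^2) * SS)
  rcases eq_or_lt_of_le hn with hn2 | hn3
  · -- case n = 2
    subst hn2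
    have hb := hgam 0 1
    have hs01 : s 0 1 = 1 - t 0 := by
      have h := hrow 0
      rw [Fin.sum_univ_two] at h
      have : t 0 = s 0 0 := rfl
      linarith
    rw [hs01] at hb
    have he1 : (1:ℝ) - (1 - t 0) = t 0 := by ring
    rw [he1] at hb
    have hp1' : p 0 + p 1 = 1 := by rw [← hp1, Fin.sum_univ_two]
    have hmain := n2core (hp 0) (hp 1) hp1' (ht0 0) (ht1 0) (ht0 1) (ht1 1)
      (norm_nonneg (ip (d 0) (d 1))) hb
    have hVeq : V = p 0 * t 0 + p 1 * t 1 := by rw [hV, Fin.sum_univ_two]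
    have hSS2 : SS = 2*(p 0 * p 1 * ‖ip (d 0) (d 1)‖^2) := by
      rw [hSS, Fin.sum_univ_two, Fin.sum_univ_two, Fin.sum_univ_two,
        if_pos (rfl : (0:Fin 2) = 0), if_pos (rfl : (1:Fin 2) = 1),
        if_neg (by decide : ¬(0:Fin 2) = 1), if_neg (by decide : ¬(1:Fin 2) = 0),
        ip_norm_swap (d 1) (d 0)]
      ring
    have harg : ((((2:ℕ)):ℝ)-1)^2/(((2:ℕ)):ℝ)^2 - (2*((((2:ℕ)):ℝ)-1)/(((2:ℕ)):ℝ)^2) * SS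
        = 1/4 - p 0 * p 1 * ‖ip (d 0) (d 1)‖^2 := by
      rw [hSS2]; norm_num; ring
    rw [hVeq, harg]
    have : (1:ℝ)/(((2:ℕ)):ℝ) = 1/2 := by norm_num
    rw [this]
    exact hmain
  · -- case n ≥ 3
    have hn3' : (3:ℝ) ≤ (n:ℝ) := by exact_mod_cast hn3
    by_cases hVle : V ≤ 1/(n:ℝ)
    · have := Real.sqrt_nonneg (((n:ℝ)-1)^2/(n:ℝ)^2 - (2*((n:ℝ)-1)/(n:ℝ)^2) * SS)
      linarith
    · push_neg at hVle
      have hg : ∀ i k : Fin n, i ≠ k → ‖ip (d k) (d i)‖^2 ≤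
          (1 - (2*t i-1)*(2*t k-1)
            + (2*(Real.sqrt (t i)*Real.sqrt (1-t i)))*(2*(Real.sqrt (t k)*Real.sqrt (1-t k))))/2
          + (1-(2*t i-1))*(1-(2*t k-1))/4 := by
        intro i k hik
        have hb := hgam i k
        have hsik : s i k ≤ 1 - t i := by
          have := hpairsum i k hik
          have ht : t i = s i i := rfl
          linarith
        have hcapp := pair_cap (ht0 i) (ht1 i) (ht0 k) (ht1 k) (hs0 i k) hsik
          (norm_nonneg (ip (d i) (d k))) hb
        have hidt := cap_id (Real.sq_sqrt (ht0 i))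
          (Real.sq_sqrt (show (0:ℝ) ≤ 1 - t i by linarith [ht1 i]))
          (Real.sq_sqrt (ht0 k))
          (Real.sq_sqrt (show (0:ℝ) ≤ 1 - t k by linarith [ht1 k]))
        rw [ip_norm_swap (d k) (d i)]
        have hb2e2 : (Real.sqrt (1-t i))^2*(Real.sqrt (1-t k))^2 = (1-t i)*(1-t k) := by
          rw [Real.sq_sqrt (show (0:ℝ) ≤ 1 - t i by linarith [ht1 i]),
            Real.sq_sqrt (show (0:ℝ) ≤ 1 - t k by linarith [ht1 k])]
        rw [← hidt, hb2e2]
        exact hcapp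
      have := agg3 hn3' p t (fun i k => ‖ip (d k) (d i)‖) hp hp1 ht0 ht1 hg hVle
      exact this
open Matrix ComplexOrder in
lemma unif_psd {m n : ℕ} (hn : 0 < n) :
    (((n:ℂ)⁻¹) • (1 : Matrix (Fin m) (Fin m) ℂ)).PosSemidef := by
  refine Matrix.PosSemidef.of_dotProduct_mulVec_nonneg ?_ ?_
  · unfold Matrix.IsHermitian
    rw [Matrix.conjTranspose_smul, Matrix.conjTranspose_one]
    congr 1
    rw [star_inv₀, star_natCast]
  · intro v
    rw [Matrix.smul_mulVec, Matrix.one_mulVec, dotProduct_smul]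
    have h1 : 0 ≤ star v ⬝ᵥ v := by
      have := (Matrix.PosSemidef.one (n := Fin m) (R := ℂ)).dotProduct_mulVec_nonneg v
      rwa [Matrix.one_mulVec] at this
    have h2 : (0:ℂ) ≤ (n:ℂ)⁻¹ := by
      rw [show ((n:ℂ))⁻¹ = (((n:ℝ)⁻¹ : ℝ) : ℂ) by push_cast; ring]
      rw [Complex.zero_le_real]
      positivity
    rw [smul_eq_mul]
    exact mul_nonneg h2 h1

open Matrix ComplexOrder in
lemma unif_mem {m n : ℕ} (hn : 2 ≤ n) (d : Fin n → Fin m → ℂ)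
    (hd : ∀ i, ip (d i) (d i) = 1) (p : Fin n → ℝ) (hp1 : ∑ i, p i = 1) :
    (1/(n:ℝ)) ∈ { x : ℝ | ∃ Pov : Fin n → Matrix (Fin m) (Fin m) ℂ,
      (∀ i, (Pov i).PosSemidef) ∧ (∑ i, Pov i) = 1 ∧
      x = ∑ i, p i * (ip (d i) ((Pov i) *ᵥ (d i))).re } := by
  have hn0 : 0 < n := by omega
  have hnC : ((n:ℂ)) ≠ 0 := by exact_mod_cast Nat.cast_ne_zero.mpr (by omega)
  refine ⟨fun _ => ((n:ℂ)⁻¹) • 1, fun _ => unif_psd hn0, ?_, ?_⟩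
  · rw [Finset.sum_const, Finset.card_univ, Fintype.card_fin]
    rw [← Nat.cast_smul_eq_nsmul ℂ, smul_smul, mul_inv_cancel₀ hnC, one_smul]
  · have hval : ∀ i, (ip (d i) ((((n:ℂ)⁻¹) • (1 : Matrix (Fin m) (Fin m) ℂ)) *ᵥ (d i))).re
        = (n:ℝ)⁻¹ := by
      intro i
      rw [Matrix.smul_mulVec, Matrix.one_mulVec, ip_smul, hd i, mul_one]
      rw [show ((n:ℂ))⁻¹ = (((n:ℝ)⁻¹ : ℝ) : ℂ) by push_cast; ring]
      exact Complex.ofReal_re _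
    rw [Finset.sum_congr rfl fun i _ => by rw [hval i]]
    rw [← Finset.sum_mul, hp1, one_mul, one_div]

open Matrix ComplexOrder in
lemma ptraceB_diag {n : ℕ} (p : Fin n → ℝ) (hp : ∀ i, 0 ≤ p i)
    (u : Fin n → Fin n → ℂ) (hu : ∀ i j, ip (u i) (u j) = if i = j then 1 else 0)
    (ψ : Fin n × Fin n → ℂ) (hψ : ψ = fun x => (Real.sqrt (p x.1) : ℂ) * u x.1 x.2) :
    ptraceB (vecMulVec ψ (star ψ)) = Matrix.diagonal (fun i => (p i : ℂ)) := by
  ext i k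
  simp only [ptraceB, Matrix.of_apply, Matrix.vecMulVec_apply, hψ, Pi.star_apply]
  have hterm : ∀ j : Fin n,
      ((Real.sqrt (p i) : ℂ) * u i j) * star ((Real.sqrt (p k) : ℂ) * u k j)
      = ((Real.sqrt (p i) : ℂ) * (Real.sqrt (p k) : ℂ)) * (star (u k j) * u i j) := by
    intro j
    rw [star_mul', Complex.star_def, Complex.conj_ofReal]
    ring
  rw [Finset.sum_congr rfl fun j _ => hterm j, ← Finset.mul_sum]
  rw [show (∑ j, star (u k j) * u i j) = ip (u k) (u i) from rfl, hu k i]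
  by_cases h : i = k
  · subst h
    rw [if_pos rfl, mul_one, Matrix.diagonal_apply_eq, ← Complex.ofReal_mul,
      Real.mul_self_sqrt (hp i)]
  · rw [if_neg (Ne.symm h), mul_zero, Matrix.diagonal_apply_ne _ h]

open Matrix ComplexOrder in
lemma purity_diag {n : ℕ} (p : Fin n → ℝ) :
    purity (Matrix.diagonal (fun i : Fin n => (p i : ℂ))) = ∑ i, (p i)^2 := by
  unfold purity
  rw [Matrix.diagonal_mul_diagonal, Matrix.trace_diagonal, Complex.re_sum]
  apply Finset.sum_congr rfl; intro i _
  rw [← Complex.ofReal_mul, Complex.ofReal_re, sq]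

open Matrix ComplexOrder in
lemma purity_rtAB {n m : ℕ} (d : Fin n → Fin m → ℂ)
    (p : Fin n → ℝ) (hp : ∀ i, 0 ≤ p i)
    (u : Fin n → Fin n → ℂ) (hu : ∀ i j, ip (u i) (u j) = if i = j then 1 else 0)
    (ρtAB : Matrix (Fin n × Fin n) (Fin n × Fin n) ℂ)
    (hρtAB : ρtAB = Matrix.of fun x y =>
      (Real.sqrt (p x.1 * p y.1) : ℂ) * ip (d y.1) (d x.1) * u x.1 x.2 * star (u y.1 y.2)) :
    purity ρtAB = ∑ i, ∑ k, p i * p k * ‖ip (d k) (d i)‖^2 := by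
  have hE : ∀ i k : Fin n,
      ((Real.sqrt (p i * p k) : ℂ) * ip (d k) (d i)) * ((Real.sqrt (p k * p i) : ℂ) * ip (d i) (d k))
      = (((p i * p k : ℝ) : ℂ)) * ((‖ip (d k) (d i)‖^2 : ℝ) : ℂ) := by
    intro i k
    have h1 : ip (d i) (d k) = star (ip (d k) (d i)) := by
      simp only [ip, star_sum, star_mul', star_star]
      exact Finset.sum_congr rfl fun j _ => mul_comm _ _
    have h2 : (Real.sqrt (p i * p k) : ℂ) * (Real.sqrt (p k * p i) : ℂ) = ((p i * p k : ℝ) : ℂ) := by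
      rw [show p k * p i = p i * p k from mul_comm _ _, ← Complex.ofReal_mul,
        Real.mul_self_sqrt (mul_nonneg (hp i) (hp k))]
    have h3 : ip (d k) (d i) * star (ip (d k) (d i)) = ((‖ip (d k) (d i)‖^2 : ℝ) : ℂ) := by
      rw [mul_comm]
      have h4 := Complex.conj_mul' (ip (d k) (d i))
      rw [show (starRingEnd ℂ) (ip (d k) (d i)) = star (ip (d k) (d i)) from rfl] at h4
      rw [h4]; push_cast; ring
    calc ((Real.sqrt (p i * p k) : ℂ) * ip (d k) (d i)) * ((Real.sqrt (p k * p i) : ℂ) * ip (d i) (d k))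
        = ((Real.sqrt (p i * p k) : ℂ) * (Real.sqrt (p k * p i) : ℂ)) *
          (ip (d k) (d i) * ip (d i) (d k)) := by ring
    _ = _ := by rw [h2, h1, h3]
  have htr : (ρtAB * ρtAB).trace
      = ∑ i, ∑ k, (((p i * p k : ℝ) : ℂ)) * ((‖ip (d k) (d i)‖^2 : ℝ) : ℂ) := by
    rw [Matrix.trace]
    calc ∑ x, (ρtAB * ρtAB).diag x = ∑ x, ∑ y, ρtAB x y * ρtAB y x := by
          apply Finset.sum_congr rfl; intro x _
          rw [Matrix.diag_apply, Matrix.mul_apply]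
    _ = ∑ i, ∑ a, ∑ k, ∑ b, ρtAB (i,a) (k,b) * ρtAB (k,b) (i,a) := by
          rw [Fintype.sum_prod_type]
          apply Finset.sum_congr rfl; intro i _
          apply Finset.sum_congr rfl; intro a _
          rw [Fintype.sum_prod_type]
    _ = ∑ i, ∑ k, ∑ a, ∑ b, ρtAB (i,a) (k,b) * ρtAB (k,b) (i,a) := by
          apply Finset.sum_congr rfl; intro i _
          exact Finset.sum_comm
    _ = _ := by
          apply Finset.sum_congr rfl; intro i _
          apply Finset.sum_congr rfl; intro k _
          have hpt : ∀ a b : Fin n, ρtAB (i,a) (k,b) * ρtAB (k,b) (i,a)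
              = (((Real.sqrt (p i * p k) : ℂ) * ip (d k) (d i)) *
                  ((Real.sqrt (p k * p i) : ℂ) * ip (d i) (d k))) *
                ((star (u i a) * u i a) * (star (u k b) * u k b)) := by
            intro a b
            rw [hρtAB]
            simp only [Matrix.of_apply]
            ring
          calc ∑ a, ∑ b, ρtAB (i,a) (k,b) * ρtAB (k,b) (i,a)
              = ∑ a, ∑ b, (((Real.sqrt (p i * p k) : ℂ) * ip (d k) (d i)) *
                  ((Real.sqrt (p k * p i) : ℂ) * ip (d i) (d k))) *
                ((star (u i a) * u i a) * (star (u k b) * u k b)) :=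
              Finset.sum_congr rfl fun a _ => Finset.sum_congr rfl fun b _ => hpt a b
          _ = (((Real.sqrt (p i * p k) : ℂ) * ip (d k) (d i)) *
                  ((Real.sqrt (p k * p i) : ℂ) * ip (d i) (d k))) *
                ((∑ a, star (u i a) * u i a) * (∑ b, star (u k b) * u k b)) := by
              rw [Finset.sum_mul_sum, Finset.mul_sum]
              apply Finset.sum_congr rfl; intro a _
              rw [Finset.mul_sum]
          _ = _ := by
              rw [show (∑ a, star (u i a) * u i a) = ip (u i) (u i) from rfl,
                show (∑ b, star (u k b) * u k b) = ip (u k) (u k) from rfl,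
                hu i i, if_pos rfl, hu k k, if_pos rfl, mul_one, mul_one, hE i k]
  unfold purity
  rw [htr, Complex.re_sum]
  apply Finset.sum_congr rfl; intro i _
  rw [Complex.re_sum]
  apply Finset.sum_congr rfl; intro k _
  rw [← Complex.ofReal_mul, Complex.ofReal_re]

/-- for a pure bipartite input state with orthonormal memory states, the
visibility vanishes, the normalized concurrence squared is `(2(n−1)/n²)(1 − ∑ i, p_i²)`,
and the duality between path distinguishability and entanglement holds. -/
theorem stmt16 (n m : ℕ) (hn : 2 ≤ n) (d : Fin n → Fin m → ℂ)
    (hd : ∀ i, ip (d i) (d i) = 1)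
    (p : Fin n → ℝ) (hp : ∀ i, 0 ≤ p i) (hp1 : ∑ i, p i = 1)
    (u : Fin n → Fin n → ℂ)
    (hu : ∀ i j, ip (u i) (u j) = if i = j then 1 else 0)
    -- the pure bipartite input state ψ_AB = ∑ i, √(p i) • e_i ⊗ u_i
    (ψ : Fin n × Fin n → ℂ) (hψ : ψ = fun x => (Real.sqrt (p x.1) : ℂ) * u x.1 x.2)
    -- the reduced state of the particle
    (ρA : Matrix (Fin n) (Fin n) ℂ)
    (hρA : ρA = Matrix.of fun i k => (Real.sqrt (p i * p k) : ℂ) * ip (u k) (u i))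
    -- the normalized concurrence squared E(ψ_AB)² = (2(n−1)/n²)(1 − Tr((Tr_B ψψ^*)²))
    (Esq : ℝ)
    (hE : Esq = (2 * ((n : ℝ) - 1) / (n : ℝ) ^ 2) *
      (1 - purity (ptraceB (vecMulVec ψ (star ψ)))))
    -- the post-interaction bipartite state
    (ρtAB : Matrix (Fin n × Fin n) (Fin n × Fin n) ℂ)
    (hρtAB : ρtAB = Matrix.of fun x y =>
      (Real.sqrt (p x.1 * p y.1) : ℂ) * ip (d y.1) (d x.1) * u x.1 x.2 * star (u y.1 y.2)) :
    Vis d ρA = 0 ∧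
    Esq = (2 * ((n : ℝ) - 1) / (n : ℝ) ^ 2) * (1 - ∑ i, (p i) ^ 2) ∧
    (Ps d p - 1 / n) ^ 2 + Esq ≤
      ((n : ℝ) ^ 2 - 1) / (n : ℝ) ^ 2 -
        (2 * ((n : ℝ) - 1) / (n : ℝ) ^ 2) * purity ρtAB := by
  have hN2 : (2:ℝ) ≤ (n:ℝ) := by exact_mod_cast hn
  have hN0 : (0:ℝ) < (n:ℝ) := by linarith
  -- Part 1 : visibility vanishes
  have hvis : Vis d ρA = 0 := by
    unfold Vis
    have hz : ∑ i, ∑ k, (if i = k then (0:ℝ) else ‖ip (d k) (d i)‖^2 * ‖ρA i k‖^2) = 0 := by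
      apply Finset.sum_eq_zero; intro i _
      apply Finset.sum_eq_zero; intro k _
      by_cases h : i = k
      · rw [if_pos h]
      · rw [if_neg h, hρA]
        simp only [Matrix.of_apply]
        rw [hu k i, if_neg (Ne.symm h), mul_zero, norm_zero]
        ring
    rw [hz, mul_zero, Real.sqrt_zero]
  -- Part 2 : concurrence
  have hpur1 : purity (ptraceB (vecMulVec ψ (star ψ))) = ∑ i, (p i)^2 := by
    rw [ptraceB_diag p hp u hu ψ hψ, purity_diag]
  have hE2 : Esq = (2 * ((n : ℝ) - 1) / (n : ℝ) ^ 2) * (1 - ∑ i, (p i) ^ 2) := by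
    rw [hE, hpur1]
  refine ⟨hvis, hE2, ?_⟩
  -- Part 3 : the duality inequality
  have hpur2 : purity ρtAB = ∑ i, ∑ k, p i * p k * ‖ip (d k) (d i)‖^2 :=
    purity_rtAB d p hp u hu ρtAB hρtAB
  have hnorm1 : ∀ i k : Fin n, ‖ip (d k) (d i)‖ ≤ 1 := by
    intro i k
    have h := ip_norm_le (d k) (d i)
    rw [hd k, hd i] at h
    simpa using h
  have hsplitQ : ∑ i, ∑ k, p i * p k * ‖ip (d k) (d i)‖^2
      = (∑ i, (p i)^2) + ∑ i, ∑ k, (if i = k then 0 else p i * p k * ‖ip (d k) (d i)‖^2) := by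
    have hpt : ∀ i k : Fin n, p i * p k * ‖ip (d k) (d i)‖^2
        = (if i = k then p i * p k * ‖ip (d k) (d i)‖^2 else 0)
          + (if i = k then 0 else p i * p k * ‖ip (d k) (d i)‖^2) := by
      intro i k; by_cases h : i = k <;> simp [h]
    calc ∑ i, ∑ k, p i * p k * ‖ip (d k) (d i)‖^2
        = ∑ i, ∑ k, ((if i = k then p i * p k * ‖ip (d k) (d i)‖^2 else 0)
          + (if i = k then 0 else p i * p k * ‖ip (d k) (d i)‖^2)) :=
          Finset.sum_congr rfl fun i _ => Finset.sum_congr rfl fun k _ => hpt i k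
    _ = (∑ i, ∑ k, if i = k then p i * p k * ‖ip (d k) (d i)‖^2 else 0)
          + ∑ i, ∑ k, (if i = k then 0 else p i * p k * ‖ip (d k) (d i)‖^2) := by
        rw [← Finset.sum_add_distrib]
        exact Finset.sum_congr rfl fun i _ => Finset.sum_add_distrib
    _ = _ := by
        congr 1
        apply Finset.sum_congr rfl; intro i _
        simp_rw [Finset.sum_ite_eq, Finset.mem_univ, if_true]
        rw [hd i]
        simp [sq]
  set SS : ℝ := ∑ i, ∑ k, (if i = k then 0 else p i * p k * ‖ip (d k) (d i)‖^2) with hSSdef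
  have hSS0 : 0 ≤ SS := by
    apply Finset.sum_nonneg; intro i _
    apply Finset.sum_nonneg; intro k _
    by_cases h : i = k
    · rw [if_pos h]
    · rw [if_neg h]
      exact mul_nonneg (mul_nonneg (hp i) (hp k)) (by positivity)
  have hSSub : SS ≤ 1 - ∑ i, (p i)^2 := by
    have h1 : SS ≤ ∑ i, ∑ k, (if i = k then 0 else p i * p k) := by
      apply Finset.sum_le_sum; intro i _
      apply Finset.sum_le_sum; intro k _
      by_cases h : i = k
      · rw [if_pos h, if_pos h]
      · rw [if_neg h, if_neg h]
        have h2 : ‖ip (d k) (d i)‖^2 ≤ 1 := by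
          nlinarith [hnorm1 i k, norm_nonneg (ip (d k) (d i))]
        nlinarith [mul_nonneg (hp i) (hp k)]
    rw [offdiag_sum p, hp1] at h1
    nlinarith [h1]
  have hQlb : 1 ≤ (n:ℝ) * ∑ i, (p i)^2 := by
    have h := Finset.sum_mul_sq_le_sq_mul_sq Finset.univ (fun _ : Fin n => (1:ℝ)) p
    simp only [one_pow, one_mul] at h
    have hcard : ∑ _i : Fin n, (1:ℝ) = (n:ℝ) := by simp
    rw [hcard, hp1] at h
    calc (1:ℝ) = 1^2 := by norm_num
    _ ≤ (n:ℝ) * ∑ i, (p i)^2 := h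
  have harg0 : 0 ≤ ((n:ℝ)-1)^2/(n:ℝ)^2 - (2*((n:ℝ)-1)/(n:ℝ)^2) * SS := by
    have hnum : 0 ≤ ((n:ℝ)-1)^2 - 2*((n:ℝ)-1)*SS := by
      nlinarith [hSSub, hQlb, hN2, hN0, hSS0]
    have : ((n:ℝ)-1)^2/(n:ℝ)^2 - (2*((n:ℝ)-1)/(n:ℝ)^2) * SS
        = (((n:ℝ)-1)^2 - 2*((n:ℝ)-1)*SS)/(n:ℝ)^2 := by ring
    rw [this]
    positivity
  -- bounds on Ps
  have hub : ∀ x ∈ { x : ℝ | ∃ Pov : Fin n → Matrix (Fin m) (Fin m) ℂ,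
      (∀ i, (Pov i).PosSemidef) ∧ (∑ i, Pov i) = 1 ∧
      x = ∑ i, p i * (ip (d i) ((Pov i) *ᵥ (d i))).re },
      x ≤ 1/(n:ℝ) + Real.sqrt (((n:ℝ)-1)^2/(n:ℝ)^2 - (2*((n:ℝ)-1)/(n:ℝ)^2) * SS) := by
    rintro x ⟨Pov, hposi, hsumi, rfl⟩
    exact povm_bound hn d hd p hp hp1 Pov hposi hsumi
  have hmem := unif_mem hn d hd p hp1
  have hPsub : Ps d p ≤ 1/(n:ℝ) + Real.sqrt (((n:ℝ)-1)^2/(n:ℝ)^2 - (2*((n:ℝ)-1)/(n:ℝ)^2) * SS) := by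
    unfold Ps
    exact csSup_le ⟨1/(n:ℝ), hmem⟩ hub
  have hPslb : 1/(n:ℝ) ≤ Ps d p := by
    unfold Ps
    exact le_csSup ⟨1/(n:ℝ) + Real.sqrt (((n:ℝ)-1)^2/(n:ℝ)^2 - (2*((n:ℝ)-1)/(n:ℝ)^2) * SS),
      fun x hx => hub x hx⟩ hmem
  have hsq : (Ps d p - 1/(n:ℝ))^2 ≤ ((n:ℝ)-1)^2/(n:ℝ)^2 - (2*((n:ℝ)-1)/(n:ℝ)^2) * SS := by
    have h1 : 0 ≤ Ps d p - 1/(n:ℝ) := by linarith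
    have h2 : Ps d p - 1/(n:ℝ) ≤
        Real.sqrt (((n:ℝ)-1)^2/(n:ℝ)^2 - (2*((n:ℝ)-1)/(n:ℝ)^2) * SS) := by linarith
    calc (Ps d p - 1/(n:ℝ))^2
        ≤ (Real.sqrt (((n:ℝ)-1)^2/(n:ℝ)^2 - (2*((n:ℝ)-1)/(n:ℝ)^2) * SS))^2 :=
          pow_le_pow_left₀ h1 h2 2
    _ = _ := Real.sq_sqrt harg0
  rw [hE2, hpur2, hsplitQ]
  have hident : ((n:ℝ)^2-1)/(n:ℝ)^2
      - (2*((n:ℝ)-1)/(n:ℝ)^2) * ((∑ i, (p i)^2) + SS)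
      - (2*((n:ℝ)-1)/(n:ℝ)^2) * (1 - ∑ i, (p i)^2)
      = ((n:ℝ)-1)^2/(n:ℝ)^2 - (2*((n:ℝ)-1)/(n:ℝ)^2) * SS := by
    field_simp
    ring
  linarith [hsq, hident]
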